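/- Let x_1 ≥ x_2 ≥ … ≥ x_n ≥ 0 with arithmetic mean A and geometric mean G. Then (√x_1 − √x_n)² ≤ n(A − G), and consequently x_1 − x_n ≤ (√x_1 + √x_n)·√(n(A − G)). -/

import Mathlib

open scoped BigOperators

/-- AM-GM stability: for `x_1 ≥ … ≥ x_n ≥ 0` with arithmetic mean `A` and geometric
mean `G`, `(√x_1 − √x_n)² ≤ n(A − G)` and
`x_1 − x_n ≤ (√x_1 + √x_n)·√(n(A − G))`. -/
theorem stmt14 (n : ℕ) (x : Fin (n + 1) → ℝ) (hx0 : ∀ i, 0 ≤ x i)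
    (hdec : ∀ i j : Fin (n + 1), i ≤ j → x j ≤ x i)
    (A G : ℝ) (hA : A = (∑ i, x i) / ((n : ℝ) + 1))
    (hG : G = (∏ i, x i) ^ ((1 : ℝ) / ((n : ℝ) + 1))) :
    (Real.sqrt (x 0) - Real.sqrt (x (Fin.last n))) ^ 2 ≤ ((n : ℝ) + 1) * (A - G) ∧
    x 0 - x (Fin.last n) ≤
      (Real.sqrt (x 0) + Real.sqrt (x (Fin.last n))) *
        Real.sqrt (((n : ℝ) + 1) * (A - G)) := by
  set l : Fin (n + 1) := Fin.last n with hl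
  have hx00 : (0:ℝ) ≤ x 0 := hx0 0
  have hxl0 : (0:ℝ) ≤ x l := hx0 l
  have hsq0 : Real.sqrt (x 0) ^ 2 = x 0 := Real.sq_sqrt hx00
  have hsql : Real.sqrt (x l) ^ 2 = x l := Real.sq_sqrt hxl0
  -- key claim: (n+1)·G ≤ ∑ x - x 0 - x l + 2·√(x0·xl)
  have key : ((n : ℝ) + 1) * G ≤
      (∑ i, x i) - x 0 - x l + 2 * Real.sqrt (x 0 * x l) := by
    rcases Nat.eq_zero_or_pos n with hn | hn
    · subst hn
      have hl0 : l = 0 := by simp [hl]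
      have hG1 : G = x 0 := by
        rw [hG]
        simp [Real.rpow_natCast]
      rw [hl0, hG1]
      have : Real.sqrt (x 0 * x 0) = x 0 := by
        rw [Real.sqrt_mul_self hx00]
      rw [this]
      simp [Fin.sum_univ_one]
      ring_nf
      nlinarith [hx00]
    · have h0l : (0 : Fin (n+1)) ≠ l := by
        simp only [hl, Ne, Fin.ext_iff, Fin.val_last, Fin.val_zero]
        omega
      set c : ℝ := Real.sqrt (x 0 * x l) with hc
      have hc0 : 0 ≤ c := Real.sqrt_nonneg _
      have hcc : c * c = x 0 * x l := Real.mul_self_sqrt (mul_nonneg hx00 hxl0)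
      set y : Fin (n+1) → ℝ := fun i => if i = 0 ∨ i = l then c else x i with hy
      have hy0 : ∀ i, 0 ≤ y i := by
        intro i; by_cases h : i = 0 ∨ i = l <;> simp [hy, h, hc0, hx0 i]
      have hlmem : l ∈ (Finset.univ : Finset (Fin (n+1))).erase 0 :=
        Finset.mem_erase.2 ⟨Ne.symm h0l, Finset.mem_univ _⟩
      -- products agree
      have hprod : (∏ i, y i) = ∏ i, x i := by
        rw [← Finset.mul_prod_erase Finset.univ y (Finset.mem_univ 0),
            ← Finset.mul_prod_erase _ y hlmem,
            ← Finset.mul_prod_erase Finset.univ x (Finset.mem_univ 0),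
            ← Finset.mul_prod_erase _ x hlmem]
        have hrest : (∏ i ∈ (Finset.univ.erase 0).erase l, y i)
            = ∏ i ∈ (Finset.univ.erase 0).erase l, x i := by
          apply Finset.prod_congr rfl
          intro i hi
          rcases Finset.mem_erase.1 hi with ⟨hi1, hi2⟩
          rcases Finset.mem_erase.1 hi2 with ⟨hi3, _⟩
          simp [hy, hi1, hi3]
        rw [hrest]
        have hy00 : y 0 = c := by simp [hy]
        have hyl : y l = c := by simp [hy]
        rw [hy00, hyl, ← mul_assoc, ← mul_assoc, hcc]
      -- sums
      have hsum : (∑ i, y i) = (∑ i, x i) - x 0 - x l + 2 * c := by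
        rw [← Finset.add_sum_erase Finset.univ y (Finset.mem_univ 0),
            ← Finset.add_sum_erase _ y hlmem,
            ← Finset.add_sum_erase Finset.univ x (Finset.mem_univ 0),
            ← Finset.add_sum_erase _ x hlmem]
        have hrest : (∑ i ∈ (Finset.univ.erase 0).erase l, y i)
            = ∑ i ∈ (Finset.univ.erase 0).erase l, x i := by
          apply Finset.sum_congr rfl
          intro i hi
          rcases Finset.mem_erase.1 hi with ⟨hi1, hi2⟩
          rcases Finset.mem_erase.1 hi2 with ⟨hi3, _⟩
          simp [hy, hi1, hi3]
        have hy00 : y 0 = c := by simp [hy]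
        have hyl : y l = c := by simp [hy]
        rw [hrest, hy00, hyl]
        ring
      -- AM-GM on y
      have hnpos : (0:ℝ) < (n:ℝ) + 1 := by positivity
      have hw : (∑ _i : Fin (n+1), (1 : ℝ) / ((n:ℝ)+1)) = 1 := by
        rw [Finset.sum_const, Finset.card_univ, Fintype.card_fin]
        rw [nsmul_eq_mul]; push_cast
        field_simp
      have amgm := Real.geom_mean_le_arith_mean_weighted Finset.univ
        (fun _ => (1:ℝ)/((n:ℝ)+1)) y
        (fun i _ => by positivity) hw (fun i _ => hy0 i)
      have hlhs : (∏ i, y i ^ ((1:ℝ)/((n:ℝ)+1))) = G := by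
        rw [Real.finset_prod_rpow Finset.univ y (fun i _ => hy0 i), hprod, hG]
      have hrhs : (∑ i : Fin (n+1), (1:ℝ)/((n:ℝ)+1) * y i) = (∑ i, y i) / ((n:ℝ)+1) := by
        rw [← Finset.mul_sum]
        ring
      rw [hlhs, hrhs] at amgm
      have h2 : G * ((n:ℝ)+1) ≤ ∑ i, y i := (le_div_iff₀ hnpos).1 amgm
      rw [hsum] at h2
      linarith
  -- first claim
  have hsqrtmul : Real.sqrt (x 0 * x l) = Real.sqrt (x 0) * Real.sqrt (x l) :=
    Real.sqrt_mul hx00 _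
  have hAsum : ((n:ℝ)+1) * A = ∑ i, x i := by
    rw [hA]; field_simp
  have first : (Real.sqrt (x 0) - Real.sqrt (x l)) ^ 2 ≤ ((n : ℝ) + 1) * (A - G) := by
    have : ((n:ℝ)+1) * (A - G) = ((n:ℝ)+1) * A - ((n:ℝ)+1) * G := by ring
    rw [this, hAsum]
    nlinarith [key, hsqrtmul, hsq0, hsql]
  refine ⟨first, ?_⟩
  -- second claim
  have hdiff0 : 0 ≤ Real.sqrt (x 0) - Real.sqrt (x l) := by
    have := Real.sqrt_le_sqrt (hdec 0 l (Fin.zero_le l))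
    linarith
  have hRHS0 : 0 ≤ ((n:ℝ)+1) * (A - G) := le_trans (by positivity) first
  have hle : Real.sqrt (x 0) - Real.sqrt (x l) ≤ Real.sqrt (((n:ℝ)+1) * (A - G)) :=
    (Real.le_sqrt hdiff0 hRHS0).2 first
  have hfac : x 0 - x l = (Real.sqrt (x 0) + Real.sqrt (x l)) *
      (Real.sqrt (x 0) - Real.sqrt (x l)) := by
    nlinarith [hsq0, hsql]
  rw [hfac]
  apply mul_le_mul_of_nonneg_left hle
  positivity
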